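/- For every non-increasing sequence s = (x_1,...,x_n) in S_n(N), rank(s) equals the number of sequences s' in S_n(N) with s' <lex s. -/

import Mathlib

/-- `s : Fin n → ℕ` is a non-increasing sequence of length `n` over the alphabet
`N = {0,1,...,k}`. -/
def IsNonInc {n : ℕ} (k : ℕ) (s : Fin n → ℕ) : Prop :=
  (∀ i, s i ≤ k) ∧ ∀ i j : Fin n, i ≤ j → s j ≤ s i

/-- Strict lexicographic order: `s <lex t` iff there is an index `j` with
`s i = t i` for all `i < j` and `s j < t j`. -/
def LexLt {n : ℕ} (s t : Fin n → ℕ) : Prop :=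
  ∃ j : Fin n, (∀ i, i < j → s i = t i) ∧ s j < t j

/-- `rank(s) = ∑_{i=1}^n C(n + x_i - i, x_i - 1)`, where a summand with
`x_i = 0` is taken to be `0` (indices `i : Fin n` are 0-based, so `i+1` is the
1-based position). -/
def rank {n : ℕ} (s : Fin n → ℕ) : ℕ :=
  ∑ i : Fin n, if s i = 0 then 0 else Nat.choose (n + s i - ((i : ℕ) + 1)) (s i - 1)

/-- Auxiliary: the set of non-increasing sequences of length `m` over `{0,...,w}`. -/
def NSet (m w : ℕ) : Set (Fin m → ℕ) :=
  {f | (∀ i, f i ≤ w) ∧ ∀ i j : Fin m, i ≤ j → f j ≤ f i}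

lemma NSet_finite (m w : ℕ) : (NSet m w).Finite := by
  apply Set.Finite.subset (Set.Finite.pi (fun _ : Fin m => Set.finite_Iic w))
  intro f hf
  simp only [Set.mem_pi, Set.mem_univ, Set.mem_Iic, forall_true_left]
  exact fun i => hf.1 i

lemma NSet_succ_succ (m w : ℕ) :
    NSet (m + 1) (w + 1) = NSet (m + 1) w ∪ (Fin.cons (w + 1) '' NSet m (w + 1)) := by
  ext f
  constructor
  · rintro ⟨hb, hm⟩
    by_cases h : f 0 ≤ w
    · exact Or.inl ⟨fun i => le_trans (hm 0 i (Fin.zero_le i)) h, hm⟩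
    · have h0 : f 0 = w + 1 := by have := hb 0; omega
      refine Or.inr ⟨Fin.tail f, ⟨fun i => hb i.succ,
        fun i j hij => hm i.succ j.succ (Fin.succ_le_succ_iff.mpr hij)⟩, ?_⟩
      rw [← h0]
      exact Fin.cons_self_tail f
  · rintro (⟨hb, hm⟩ | ⟨g, ⟨hb, hm⟩, rfl⟩)
    · exact ⟨fun i => (hb i).trans (Nat.le_succ w), hm⟩
    · refine ⟨fun i => ?_, fun i j hij => ?_⟩
      · induction i using Fin.cases with
        | zero => simp
        | succ i => simpa using hb i
      · induction i using Fin.cases with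
        | zero =>
          induction j using Fin.cases with
          | zero => exact le_rfl
          | succ j => simpa using hb j
        | succ i =>
          induction j using Fin.cases with
          | zero =>
            exact absurd hij (by simp [Fin.le_def])
          | succ j =>
            simpa using hm i j (Fin.succ_le_succ_iff.mp hij)

lemma NSet_card (m w : ℕ) : (NSet m w).ncard = (m + w).choose w := by
  induction m generalizing w with
  | zero =>
    have huniv : NSet 0 w = Set.univ := by
      ext f
      exact ⟨fun _ => trivial, fun _ => ⟨fun i => i.elim0, fun i => i.elim0⟩⟩
    rw [huniv, Set.ncard_univ, Nat.card_unique, Nat.zero_add, Nat.choose_self]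
  | succ m ihm =>
    induction w with
    | zero =>
      have hsingle : NSet (m + 1) 0 = {fun _ => 0} := by
        ext f
        constructor
        · rintro ⟨hb, _⟩
          funext i
          exact Nat.le_zero.mp (hb i)
        · rintro rfl
          exact ⟨fun _ => le_refl _, fun _ _ _ => le_refl _⟩
      rw [hsingle, Set.ncard_singleton, Nat.choose_zero_right]
    | succ w ihw =>
      have hdisj : Disjoint (NSet (m + 1) w) (Fin.cons (w + 1) '' NSet m (w + 1)) := by
        rw [Set.disjoint_left]
        rintro f ⟨hb, _⟩ ⟨g, _, rfl⟩
        have := hb 0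
        simp at this
      rw [NSet_succ_succ, Set.ncard_union_eq hdisj (NSet_finite _ _)
        ((NSet_finite _ _).image _),
        Set.ncard_image_of_injective _ (Fin.cons_right_injective (α := fun _ : Fin (m+1) => ℕ) (w + 1)),
        ihw, ihm (w + 1)]
      rw [show m + 1 + (w + 1) = (m + w + 1) + 1 by ring, Nat.choose_succ_succ,
        show m + 1 + w = m + w + 1 by ring, show m + (w + 1) = m + w + 1 by ring]

lemma tail_nonInc {n k : ℕ} {t : Fin (n + 1) → ℕ} (ht : IsNonInc k t) :
    IsNonInc k (Fin.tail t) :=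
  ⟨fun i => ht.1 i.succ, fun i j hij => ht.2 i.succ j.succ (Fin.succ_le_succ_iff.mpr hij)⟩

/-- For every non-increasing sequence `s` in `S_n(N)`, `rank s` equals the
number of sequences `t` in `S_n(N)` with `t <lex s`. -/
theorem rank_eq_card_lexLt (k n : ℕ) (s : Fin n → ℕ) (hs : IsNonInc k s) :
    rank s = Set.ncard {t : Fin n → ℕ | IsNonInc k t ∧ LexLt t s} := by
  induction n with
  | zero =>
    have hempty : {t : Fin 0 → ℕ | IsNonInc k t ∧ LexLt t s} = ∅ := by
      ext t
      simp only [Set.mem_setOf_eq, Set.mem_empty_iff_false, iff_false, not_and]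
      rintro _ ⟨j, _⟩
      exact j.elim0
    simp [rank, hempty]
  | succ n ih =>
    set B0 : Set (Fin (n + 1) → ℕ) := {t | IsNonInc k t ∧ t 0 < s 0} with hB0def
    set T : Set (Fin n → ℕ) := {t' | IsNonInc k t' ∧ LexLt t' (Fin.tail s)} with hTdef
    set B1 : Set (Fin (n + 1) → ℕ) := Fin.cons (s 0) '' T with hB1def
    -- the decomposition of the set of lexicographically smaller sequences
    have hdecomp : {t : Fin (n + 1) → ℕ | IsNonInc k t ∧ LexLt t s} = B0 ∪ B1 := by
      ext t
      constructor
      · rintro ⟨ht, j, heq, hlt⟩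
        induction j using Fin.cases with
        | zero => exact Or.inl ⟨ht, hlt⟩
        | succ j =>
          have h0 : t 0 = s 0 := heq 0 (Fin.succ_pos j)
          refine Or.inr ⟨Fin.tail t, ⟨tail_nonInc ht, j,
            fun i hi => heq i.succ (Fin.succ_lt_succ_iff.mpr hi), hlt⟩, ?_⟩
          rw [← h0]
          exact Fin.cons_self_tail t
      · rintro (⟨ht, h0⟩ | ⟨g, ⟨hg, j, heq, hlt⟩, rfl⟩)
        · exact ⟨ht, 0, fun i hi => absurd hi (by simp [Fin.lt_def]), h0⟩
        · haveI : NeZero n := ⟨(Fin.pos j).ne'⟩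
          have hg0 : g 0 ≤ Fin.tail s 0 := by
            rcases (Fin.zero_le j).eq_or_lt with h | h
            · rw [← h] at hlt; exact le_of_lt hlt
            · exact (heq 0 h).le
          have hs10 : Fin.tail s 0 ≤ s 0 := hs.2 0 (0 : Fin n).succ (Fin.zero_le _)
          have hgle : ∀ i, g i ≤ s 0 :=
            fun i => ((hg.2 0 i (Fin.zero_le i)).trans hg0).trans hs10
          refine ⟨⟨fun i => ?_, fun i j' hij => ?_⟩, j.succ, fun i hi => ?_, ?_⟩
          · induction i using Fin.cases with
            | zero => simpa using hs.1 0
            | succ i => simpa using hg.1 i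
          · induction i using Fin.cases with
            | zero =>
              induction j' using Fin.cases with
              | zero => exact le_rfl
              | succ j' => simpa using hgle j'
            | succ i =>
              induction j' using Fin.cases with
              | zero => exact absurd hij (by simp [Fin.le_def])
              | succ j' => simpa using hg.2 i j' (Fin.succ_le_succ_iff.mp hij)
          · induction i using Fin.cases with
            | zero => simp
            | succ i =>
              simpa [Fin.tail] using heq i (Fin.succ_lt_succ_iff.mp hi)
          · simpa [Fin.tail] using hlt
    have hdisj : Disjoint B0 B1 := by
      rw [Set.disjoint_left]
      rintro t ⟨_, hlt⟩ ⟨g, _, rfl⟩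
      simp at hlt
    have hB0fin : B0.Finite := by
      apply Set.Finite.subset (NSet_finite (n + 1) k)
      rintro t ⟨ht, _⟩
      exact ⟨ht.1, ht.2⟩
    have hTfin : T.Finite := by
      apply Set.Finite.subset (NSet_finite n k)
      rintro t ⟨ht, _⟩
      exact ⟨ht.1, ht.2⟩
    -- cardinality of B1
    have hB1card : B1.ncard = rank (Fin.tail s) := by
      rw [hB1def, Set.ncard_image_of_injective _ (Fin.cons_right_injective (α := fun _ : Fin (n+1) => ℕ) (s 0)),
        ← ih (Fin.tail s) (tail_nonInc hs)]
    -- cardinality of B0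
    have hB0card : B0.ncard =
        if s 0 = 0 then 0 else (n + 1 + s 0 - 1).choose (s 0 - 1) := by
      rcases h : s 0 with _ | c
      · have : B0 = ∅ := by
          ext t
          simp only [hB0def, Set.mem_setOf_eq, Set.mem_empty_iff_false, iff_false, not_and]
          intro _
          omega
        simp [this]
      · have hck : c ≤ k := by have := hs.1 0; omega
        have hBeq : B0 = NSet (n + 1) c := by
          ext t
          constructor
          · rintro ⟨ht, h0⟩
            exact ⟨fun i => le_trans (ht.2 0 i (Fin.zero_le i)) (by omega), ht.2⟩
          · rintro ⟨hb, hm⟩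
            exact ⟨⟨fun i => (hb i).trans hck, hm⟩, by have := hb 0; omega⟩
        rw [hBeq, NSet_card, if_neg (Nat.succ_ne_zero c)]
        congr 1
    -- rank decomposition
    have hrank : rank s =
        (if s 0 = 0 then 0 else (n + 1 + s 0 - 1).choose (s 0 - 1)) + rank (Fin.tail s) := by
      have hsum : ∀ i : Fin n,
          (if s i.succ = 0 then 0
            else (n + 1 + s i.succ - ((i.succ : ℕ) + 1)).choose (s i.succ - 1))
          = (if Fin.tail s i = 0 then 0
            else (n + Fin.tail s i - ((i : ℕ) + 1)).choose (Fin.tail s i - 1)) := by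
        intro i
        by_cases hz : s i.succ = 0
        · simp [Fin.tail, hz]
        · simp only [Fin.tail, hz, if_false]
          congr 1
          rw [Fin.val_succ]
          omega
      rw [rank, Fin.sum_univ_succ, Finset.sum_congr rfl (fun i _ => hsum i)]
      have : (∑ i : Fin n, if Fin.tail s i = 0 then 0
          else (n + Fin.tail s i - ((i : ℕ) + 1)).choose (Fin.tail s i - 1))
          = rank (Fin.tail s) := rfl
      rw [this]
      norm_num

    rw [hdecomp, Set.ncard_union_eq hdisj hB0fin (hTfin.image _), hrank, hB0card, hB1card]
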